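/- Let A and B be distinct letters. Then C_2(A B) = 3; equivalently, every two-dimensional grid Γ satisfies c_2(A B, Γ) ≤ 3, and this value is attained in the supremum defining C_2(A B). -/
import Mathlib


open scoped BigOperators

namespace WordGrid

variable {α : Type*}

/-- A valid word-search direction in dimension `d`: a nonzero vector with
entries in `{-1, 0, 1}`. -/
def IsDir (d : ℕ) (v : Fin d → ℤ) : Prop :=
  (∀ i, v i = -1 ∨ v i = 0 ∨ v i = 1) ∧ v ≠ 0

/-- `(p, v)` is an appearance of the word `w` in the grid `Γ` of shape
`ZMod (n 0) × ⋯ × ZMod (n (d-1))`: reading from `p` in direction `v`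
(reduced coordinatewise into the shape group) spells out `w`. -/
def Appears {d : ℕ} (n : Fin d → ℕ) (Γ : (∀ i, ZMod (n i)) → α) (w : List α)
    (p : ∀ i, ZMod (n i)) (v : Fin d → ℤ) : Prop :=
  IsDir d v ∧
    ∀ k : Fin w.length, Γ (fun j => p j + (((k : ℤ) * v j : ℤ) : ZMod (n j))) = w.get k

/-- The number of appearances of the word `w` in the grid `Γ`. -/
noncomputable def count {d : ℕ} (n : Fin d → ℕ) (Γ : (∀ i, ZMod (n i)) → α)
    (w : List α) : ℕ :=
  Set.ncard {pv : (∀ i, ZMod (n i)) × (Fin d → ℤ) | Appears n Γ w pv.1 pv.2}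

/-- The concentration of the word `w` in the grid `Γ`: the number of
appearances divided by the size of the grid. -/
noncomputable def conc {d : ℕ} (n : Fin d → ℕ) (Γ : (∀ i, ZMod (n i)) → α)
    (w : List α) : ℝ :=
  (count n Γ w : ℝ) / ((∏ i, n i : ℕ) : ℝ)

/-- `C d w`: the supremum of the concentration of `w` over all `d`-dimensional
grids (of all shapes with every side length positive). -/
noncomputable def C (d : ℕ) (w : List α) : ℝ :=
  sSup {x : ℝ | ∃ (n : Fin d → ℕ) (Γ : (∀ i, ZMod (n i)) → α),
    (∀ i, 0 < n i) ∧ x = conc n Γ w}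

/-- The word `w` contains at least two distinct letters. -/
def TwoLetters (w : List α) : Prop := ∃ x ∈ w, ∃ y ∈ w, x ≠ y

/-! ### Auxiliary machinery -/

/-- Coordinatewise reduction of an integer vector into the shape group. -/
def cmap {d : ℕ} (n : Fin d → ℕ) (v : Fin d → ℤ) : ∀ i, ZMod (n i) :=
  fun j => ((v j : ℤ) : ZMod (n j))

lemma cmap_add {d : ℕ} (n : Fin d → ℕ) (v w : Fin d → ℤ) :
    cmap n (v + w) = cmap n v + cmap n w := by
  funext j; simp [cmap]

lemma cmap_neg {d : ℕ} (n : Fin d → ℕ) (v : Fin d → ℤ) :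
    cmap n (-v) = -cmap n v := by
  funext j; simp [cmap]

lemma appears_pair_iff (A B : α) (n : Fin 2 → ℕ) (Γ : (∀ i, ZMod (n i)) → α)
    (p : ∀ i, ZMod (n i)) (v : Fin 2 → ℤ) :
    Appears n Γ [A, B] p v ↔ IsDir 2 v ∧ Γ p = A ∧ Γ (p + cmap n v) = B := by
  constructor
  · rintro ⟨hd, hk⟩
    refine ⟨hd, ?_, ?_⟩
    · have h0 := hk ⟨0, by norm_num⟩
      simpa using h0
    · have h1 := hk ⟨1, by norm_num⟩
      have h : (p + cmap n v) = fun j => p j + (((1 : ℤ) * v j : ℤ) : ZMod (n j)) := by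
        funext j; simp [cmap]
      rw [h]
      simpa using h1
  · rintro ⟨hd, hA, hB⟩
    refine ⟨hd, ?_⟩
    intro k
    fin_cases k
    · simpa using hA
    · have h : (p + cmap n v) = fun j => p j + (((1 : ℤ) * v j : ℤ) : ZMod (n j)) := by
        funext j; simp [cmap]
      rw [h] at hB
      simpa using hB

/-- The eight possible directions in dimension 2. -/
def Dirs : Finset (Fin 2 → ℤ) :=
  {![1,0], ![-1,0], ![0,1], ![0,-1], ![1,1], ![-1,-1], ![-1,1], ![1,-1]}

lemma mem_Dirs_of_isDir {v : Fin 2 → ℤ} (h : IsDir 2 v) : v ∈ Dirs := by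
  obtain ⟨h1, h2⟩ := h
  have hv : v = ![v 0, v 1] := by
    funext i; fin_cases i <;> simp
  have h0 := h1 0
  have h1' := h1 1
  rw [hv]; rw [hv] at h2
  unfold Dirs
  rcases h0 with e0 | e0 | e0 <;> rcases h1' with e1 | e1 | e1 <;>
    rw [e0, e1] <;> first
      | decide
      | (exfalso; apply h2; funext i; fin_cases i <;> simp [e0, e1])

lemma sum_Dirs {M : Type*} [AddCommMonoid M] (f : (Fin 2 → ℤ) → M) :
    ∑ v ∈ Dirs, f v =
      f ![1,0] + (f ![-1,0] + (f ![0,1] + (f ![0,-1] +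
        (f ![1,1] + (f ![-1,-1] + (f ![-1,1] + f ![1,-1])))))) := by
  unfold Dirs
  rw [Finset.sum_insert (by decide), Finset.sum_insert (by decide),
    Finset.sum_insert (by decide), Finset.sum_insert (by decide),
    Finset.sum_insert (by decide), Finset.sum_insert (by decide),
    Finset.sum_insert (by decide), Finset.sum_singleton]

section UB

variable (n : Fin 2 → ℕ) [∀ i, NeZero (n i)] (Γ : (∀ i, ZMod (n i)) → α) (A B : α)

open scoped Classical in
noncomputable def abCard (u : Fin 2 → ℤ) : ℕ :=
  (Finset.univ.filter fun p : ∀ i, ZMod (n i) =>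
    Γ p = A ∧ Γ (p + cmap n u) = B).card

open scoped Classical in
noncomputable def agCard (u : Fin 2 → ℤ) : ℕ :=
  (Finset.univ.filter fun p : ∀ i, ZMod (n i) =>
    (Γ p = A ↔ Γ (p + cmap n u) = A)).card

lemma pair_card (hAB : A ≠ B) (u : Fin 2 → ℤ) :
    abCard n Γ A B u + abCard n Γ A B (-u) + agCard n Γ A u ≤
      Fintype.card (∀ i, ZMod (n i)) := by
  classical
  unfold abCard agCard
  have hrev : (Finset.univ.filter fun p : ∀ i, ZMod (n i) =>
        Γ p = A ∧ Γ (p + cmap n (-u)) = B).card =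
      (Finset.univ.filter fun q : ∀ i, ZMod (n i) =>
        Γ q = B ∧ Γ (q + cmap n u) = A).card := by
    rw [← Finset.card_image_of_injective _ (add_left_injective (cmap n (-u)))]
    congr 1
    ext q
    simp only [Finset.mem_image, Finset.mem_filter, Finset.mem_univ, true_and, cmap_neg]
    constructor
    · rintro ⟨p, ⟨hA', hB'⟩, rfl⟩
      refine ⟨by simpa using hB', by simpa using hA'⟩
    · rintro ⟨hB', hA'⟩
      exact ⟨q + cmap n u, ⟨by simpa using hA', by simpa using hB'⟩, by abel⟩
  rw [hrev]
  have hdis : Fintype.card (∀ i, ZMod (n i)) =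
      (Finset.univ.filter fun p : ∀ i, ZMod (n i) =>
        (Γ p = A ↔ Γ (p + cmap n u) = A)).card +
      (Finset.univ.filter fun p : ∀ i, ZMod (n i) =>
        ¬(Γ p = A ↔ Γ (p + cmap n u) = A)).card := by
    rw [← Finset.card_univ, Finset.card_filter_add_card_filter_not]
  rw [hdis]
  have hsub : (Finset.univ.filter fun p : ∀ i, ZMod (n i) =>
        Γ p = A ∧ Γ (p + cmap n u) = B) ∪
      (Finset.univ.filter fun q : ∀ i, ZMod (n i) =>
        Γ q = B ∧ Γ (q + cmap n u) = A) ⊆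
      (Finset.univ.filter fun p : ∀ i, ZMod (n i) =>
        ¬(Γ p = A ↔ Γ (p + cmap n u) = A)) := by
    intro p hp
    simp only [Finset.mem_union, Finset.mem_filter, Finset.mem_univ, true_and] at hp ⊢
    rcases hp with ⟨h1, h2⟩ | ⟨h1, h2⟩
    · intro hiff
      exact hAB ((hiff.mp h1).symm.trans h2)
    · intro hiff
      exact hAB ((hiff.mpr h2).symm.trans h1)
  have hdisj : Disjoint
      (Finset.univ.filter fun p : ∀ i, ZMod (n i) =>
        Γ p = A ∧ Γ (p + cmap n u) = B)
      (Finset.univ.filter fun q : ∀ i, ZMod (n i) =>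
        Γ q = B ∧ Γ (q + cmap n u) = A) := by
    rw [Finset.disjoint_left]
    intro p hp hq
    simp only [Finset.mem_filter, Finset.mem_univ, true_and] at hp hq
    exact hAB (hp.1.symm.trans hq.1)
  have := Finset.card_le_card hsub
  rw [Finset.card_union_of_disjoint hdisj] at this
  omega

lemma square_card :
    2 * Fintype.card (∀ i, ZMod (n i)) ≤
      2 * agCard n Γ A ![1,0] + 2 * agCard n Γ A ![0,1] +
        agCard n Γ A ![1,1] + agCard n Γ A ![-1,1] := by
  classical
  set w1 := cmap n ![1,0] with hw1
  set w2 := cmap n ![0,1] with hw2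
  have hkey : ∀ p : ∀ i, ZMod (n i), 2 ≤
      ((if (Γ p = A ↔ Γ (p + w1) = A) then 1 else 0) +
       (if (Γ p = A ↔ Γ (p + w2) = A) then 1 else 0) +
       (if (Γ p = A ↔ Γ (p + w1 + w2) = A) then 1 else 0) +
       (if (Γ (p + w1) = A ↔ Γ (p + w2) = A) then 1 else 0) +
       (if (Γ (p + w1) = A ↔ Γ (p + w1 + w2) = A) then 1 else 0) +
       (if (Γ (p + w2) = A ↔ Γ (p + w1 + w2) = A) then 1 else 0) : ℕ) := by
    intro p
    by_cases ha : Γ p = A <;> by_cases hb : Γ (p + w1) = A <;>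
      by_cases hc : Γ (p + w2) = A <;> by_cases hd : Γ (p + w1 + w2) = A <;>
      simp [ha, hb, hc, hd]
  have hsum : 2 * Fintype.card (∀ i, ZMod (n i)) ≤
      ∑ p : ∀ i, ZMod (n i),
      ((if (Γ p = A ↔ Γ (p + w1) = A) then 1 else 0) +
       (if (Γ p = A ↔ Γ (p + w2) = A) then 1 else 0) +
       (if (Γ p = A ↔ Γ (p + w1 + w2) = A) then 1 else 0) +
       (if (Γ (p + w1) = A ↔ Γ (p + w2) = A) then 1 else 0) +
       (if (Γ (p + w1) = A ↔ Γ (p + w1 + w2) = A) then 1 else 0) +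
       (if (Γ (p + w2) = A ↔ Γ (p + w1 + w2) = A) then 1 else 0) : ℕ) := by
    calc 2 * Fintype.card (∀ i, ZMod (n i))
        = ∑ _p : ∀ i, ZMod (n i), 2 := by
          rw [Finset.sum_const, Finset.card_univ, smul_eq_mul, mul_comm]
      _ ≤ _ := Finset.sum_le_sum (fun p _ => hkey p)
  rw [Finset.sum_add_distrib, Finset.sum_add_distrib, Finset.sum_add_distrib,
    Finset.sum_add_distrib, Finset.sum_add_distrib] at hsum
  have e1 : ∑ p : ∀ i, ZMod (n i), (if (Γ p = A ↔ Γ (p + w1) = A) then 1 else 0)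
      = agCard n Γ A ![1,0] := by
    rw [Finset.sum_boole]
    simp [agCard, hw1]
  have e2 : ∑ p : ∀ i, ZMod (n i), (if (Γ p = A ↔ Γ (p + w2) = A) then 1 else 0)
      = agCard n Γ A ![0,1] := by
    rw [Finset.sum_boole]
    simp [agCard, hw2]
  have hw12 : w1 + w2 = cmap n ![1,1] := by
    rw [hw1, hw2, ← cmap_add]
    congr 1
    funext i; fin_cases i <;> simp
  have e3 : ∑ p : ∀ i, ZMod (n i), (if (Γ p = A ↔ Γ (p + w1 + w2) = A) then 1 else 0)
      = agCard n Γ A ![1,1] := by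
    have h : ∀ p : ∀ i, ZMod (n i), p + w1 + w2 = p + cmap n ![1,1] := by
      intro p; rw [add_assoc, hw12]
    simp only [h]
    rw [Finset.sum_boole]
    simp [agCard]
  have hw4 : w1 + cmap n ![-1,1] = w2 := by
    rw [hw1, hw2, ← cmap_add]
    congr 1
    funext i; fin_cases i <;> simp
  have e4 : ∑ p : ∀ i, ZMod (n i), (if (Γ (p + w1) = A ↔ Γ (p + w2) = A) then 1 else 0)
      = agCard n Γ A ![-1,1] := by
    have h : ∀ p : ∀ i, ZMod (n i), p + w2 = (p + w1) + cmap n ![-1,1] := by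
      intro p; rw [add_assoc, hw4]
    simp only [h]
    rw [Fintype.sum_equiv (Equiv.addRight w1)
      (fun p => (if (Γ (p + w1) = A ↔ Γ (p + w1 + cmap n ![-1,1]) = A) then 1 else 0))
      (fun q => (if (Γ q = A ↔ Γ (q + cmap n ![-1,1]) = A) then 1 else 0))
      (fun p => rfl)]
    rw [Finset.sum_boole]
    simp [agCard]
  have e5 : ∑ p : ∀ i, ZMod (n i), (if (Γ (p + w1) = A ↔ Γ (p + w1 + w2) = A) then 1 else 0)
      = agCard n Γ A ![0,1] := by
    rw [Fintype.sum_equiv (Equiv.addRight w1)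
      (fun p => (if (Γ (p + w1) = A ↔ Γ (p + w1 + w2) = A) then 1 else 0))
      (fun q => (if (Γ q = A ↔ Γ (q + w2) = A) then 1 else 0))
      (fun p => rfl)]
    rw [Finset.sum_boole]
    simp [agCard, hw2]
  have e6 : ∑ p : ∀ i, ZMod (n i), (if (Γ (p + w2) = A ↔ Γ (p + w1 + w2) = A) then 1 else 0)
      = agCard n Γ A ![1,0] := by
    have h : ∀ p : ∀ i, ZMod (n i), p + w1 + w2 = (p + w2) + w1 := by
      intro p; rw [add_assoc, add_comm w1 w2, ← add_assoc]
    simp only [h]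
    rw [Fintype.sum_equiv (Equiv.addRight w2)
      (fun p => (if (Γ (p + w2) = A ↔ Γ (p + w2 + w1) = A) then 1 else 0))
      (fun q => (if (Γ q = A ↔ Γ (q + w1) = A) then 1 else 0))
      (fun p => rfl)]
    rw [Finset.sum_boole]
    simp [agCard, hw1]
  rw [e1, e2, e3, e4, e5, e6] at hsum
  omega

end UB

lemma count_le_three (A B : α) (hAB : A ≠ B) (n : Fin 2 → ℕ) (hn : ∀ i, 0 < n i)
    (Γ : (∀ i, ZMod (n i)) → α) :
    count n Γ [A, B] ≤ 3 * ∏ i, n i := by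
  classical
  haveI : ∀ i, NeZero (n i) := fun i => ⟨(hn i).ne'⟩
  have hN : Fintype.card (∀ i, ZMod (n i)) = ∏ i, n i := by
    simp [Fintype.card_pi, ZMod.card]
  set T : Finset ((∀ i, ZMod (n i)) × (Fin 2 → ℤ)) :=
    (Finset.univ ×ˢ Dirs).filter (fun pv => Appears n Γ [A, B] pv.1 pv.2) with hT
  have hST : {pv : (∀ i, ZMod (n i)) × (Fin 2 → ℤ) | Appears n Γ [A, B] pv.1 pv.2}
      = (T : Set _) := by
    ext ⟨p, v⟩
    simp only [Set.mem_setOf_eq, hT, Finset.coe_filter, Finset.mem_product,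
      Finset.mem_univ, true_and, Set.mem_setOf_eq]
    constructor
    · intro h
      exact ⟨mem_Dirs_of_isDir h.1, h⟩
    · exact fun h => h.2
  have hcount : count n Γ [A, B] = T.card := by
    rw [count, hST, Set.ncard_coe_finset]
  have hsub : T ⊆ Dirs.biUnion (fun v =>
      (Finset.univ.filter fun p : ∀ i, ZMod (n i) =>
        Γ p = A ∧ Γ (p + cmap n v) = B).image (fun p => (p, v))) := by
    intro pv hpv
    rw [hT, Finset.mem_filter] at hpv
    obtain ⟨hmem, happ⟩ := hpv
    rw [appears_pair_iff] at happ
    obtain ⟨hd, hA', hB'⟩ := happ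
    rw [Finset.mem_biUnion]
    exact ⟨pv.2, mem_Dirs_of_isDir hd,
      Finset.mem_image.mpr ⟨pv.1, Finset.mem_filter.mpr ⟨Finset.mem_univ _, hA', hB'⟩, rfl⟩⟩
  have hb : T.card ≤ ∑ v ∈ Dirs, abCard n Γ A B v := by
    calc T.card ≤ _ := Finset.card_le_card hsub
      _ ≤ ∑ v ∈ Dirs, ((Finset.univ.filter fun p : ∀ i, ZMod (n i) =>
            Γ p = A ∧ Γ (p + cmap n v) = B).image (fun p => (p, v))).card :=
          Finset.card_biUnion_le
      _ ≤ ∑ v ∈ Dirs, abCard n Γ A B v := by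
          refine Finset.sum_le_sum fun v _ => ?_
          exact Finset.card_image_le
  rw [sum_Dirs] at hb
  have hneg1 : ![(-1 : ℤ), 0] = -![1, 0] := by funext i; fin_cases i <;> simp
  have hneg2 : ![(0 : ℤ), -1] = -![0, 1] := by funext i; fin_cases i <;> simp
  have hneg3 : ![(-1 : ℤ), -1] = -![1, 1] := by funext i; fin_cases i <;> simp
  have hneg4 : ![(1 : ℤ), -1] = -![-1, 1] := by funext i; fin_cases i <;> simp
  rw [hneg1, hneg2, hneg3, hneg4] at hb
  have p1 := pair_card n Γ A B hAB ![1, 0]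
  have p2 := pair_card n Γ A B hAB ![0, 1]
  have p3 := pair_card n Γ A B hAB ![1, 1]
  have p4 := pair_card n Γ A B hAB ![-1, 1]
  have sq := square_card n Γ A
  rw [hN] at p1 p2 p3 p4 sq
  rw [hcount]
  omega

lemma conc_example (A B : α) (hAB : A ≠ B) :
    conc (fun _ => 2) (fun p : ∀ i : Fin 2, ZMod ((fun _ : Fin 2 => 2) i) =>
      if p 0 = 0 then A else B) [A, B] = 3 := by
  have cast1 : (((1 : ℤ)) : ZMod 2) = 1 := by decide
  have castneg1 : (((-1 : ℤ)) : ZMod 2) = 1 := by decide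
  have cast0 : (((0 : ℤ)) : ZMod 2) = 0 := by decide
  set D6 : Finset (Fin 2 → ℤ) :=
    {![1,-1], ![1,0], ![1,1], ![-1,-1], ![-1,0], ![-1,1]} with hD6
  have hST : {pv : (∀ i : Fin 2, ZMod ((fun _ : Fin 2 => 2) i)) × (Fin 2 → ℤ) |
        Appears (fun _ => 2) (fun p => if p 0 = 0 then A else B) [A, B] pv.1 pv.2}
      = (((Finset.univ.filter
            fun p : ∀ i : Fin 2, ZMod ((fun _ : Fin 2 => 2) i) => p 0 = 0) ×ˢ D6 :
          Finset _) : Set _) := by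
    ext ⟨p, v⟩
    rw [Set.mem_setOf_eq, appears_pair_iff]
    simp only [Finset.coe_product, Set.mem_prod, Finset.mem_coe, Finset.mem_filter,
      Finset.mem_univ, true_and]
    have hadd : ∀ u : Fin 2 → ℤ,
        (p + cmap (fun _ => 2) u) 0 = p 0 + ((u 0 : ℤ) : ZMod 2) := fun _ => rfl
    constructor
    · rintro ⟨⟨hdir, hvne⟩, hA, hB⟩
      have hp0 : p 0 = 0 := by
        by_contra h
        rw [if_neg h] at hA
        exact hAB hA.symm
      refine ⟨hp0, ?_⟩
      have hv0 : v 0 = -1 ∨ v 0 = 1 := by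
        rcases hdir 0 with h | h | h
        · exact Or.inl h
        · exfalso
          rw [hadd, h, cast0, hp0, add_zero] at hB
          rw [if_pos rfl] at hB
          exact hAB hB
        · exact Or.inr h
      have hveq : v = ![v 0, v 1] := by
        funext i; fin_cases i <;> simp
      rw [hveq, hD6]
      rcases hv0 with h0 | h0 <;> rcases hdir 1 with h1 | h1 | h1 <;>
        rw [h0, h1] <;> decide
    · rintro ⟨hp0, hv6⟩
      rw [hD6] at hv6
      simp only [Finset.mem_insert, Finset.mem_singleton] at hv6
      have hbody : ∀ u : Fin 2 → ℤ, (u 0 = -1 ∨ u 0 = 1) →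
          ((∀ i, u i = -1 ∨ u i = 0 ∨ u i = 1)) → v = u →
          (IsDir 2 v ∧ (if p 0 = 0 then A else B) = A ∧
            (if (p + cmap (fun _ => 2) v) 0 = 0 then A else B) = B) := by
        rintro u hu0 hall rfl
        refine ⟨⟨hall, ?_⟩, by rw [if_pos hp0], ?_⟩
        · intro h
          have := congrFun h 0
          simp only [Pi.zero_apply] at this
          rcases hu0 with h' | h' <;> rw [h'] at this <;> exact absurd this (by decide)
        · rw [if_neg ?_]
          rw [hadd, hp0, zero_add]
          rcases hu0 with h' | h' <;> rw [h']
          · rw [castneg1]; decide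
          · rw [cast1]; decide
      rcases hv6 with rfl | rfl | rfl | rfl | rfl | rfl <;>
        [ exact hbody _ (by decide) (by decide) rfl;
          exact hbody _ (by decide) (by decide) rfl;
          exact hbody _ (by decide) (by decide) rfl;
          exact hbody _ (by decide) (by decide) rfl;
          exact hbody _ (by decide) (by decide) rfl;
          exact hbody _ (by decide) (by decide) rfl]
  have hcount : count (fun _ => 2) (fun p : ∀ i : Fin 2, ZMod ((fun _ : Fin 2 => 2) i) =>
      if p 0 = 0 then A else B) [A, B] = 12 := by
    rw [count, hST, Set.ncard_coe_finset, Finset.card_product]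
    rw [hD6]
    decide
  rw [conc, hcount]
  norm_num

theorem statement15 (A B : α) (hAB : A ≠ B) :
    C 2 [A, B] = 3 ∧
      ∃ (n : Fin 2 → ℕ) (Γ : (∀ i, ZMod (n i)) → α),
        (∀ i, 0 < n i) ∧ conc n Γ [A, B] = 3 := by
  have hub : ∀ x ∈ {x : ℝ | ∃ (n : Fin 2 → ℕ) (Γ : (∀ i, ZMod (n i)) → α),
      (∀ i, 0 < n i) ∧ x = conc n Γ [A, B]}, x ≤ 3 := by
    rintro x ⟨n, Γ, hn, rfl⟩
    have h := count_le_three A B hAB n hn Γ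
    have hNpos : 0 < (∏ i, n i : ℕ) := Finset.prod_pos (fun i _ => hn i)
    rw [conc, div_le_iff₀ (by exact_mod_cast hNpos)]
    calc (count n Γ [A, B] : ℝ) ≤ ((3 * ∏ i, n i : ℕ) : ℝ) := by exact_mod_cast h
      _ = 3 * ((∏ i, n i : ℕ) : ℝ) := by push_cast; ring
  have hmem : (3 : ℝ) ∈ {x : ℝ | ∃ (n : Fin 2 → ℕ) (Γ : (∀ i, ZMod (n i)) → α),
      (∀ i, 0 < n i) ∧ x = conc n Γ [A, B]} := by
    exact ⟨fun _ => 2, fun p => if p 0 = 0 then A else B, fun _ => by norm_num,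
      (conc_example A B hAB).symm⟩
  constructor
  · exact le_antisymm (csSup_le ⟨3, hmem⟩ hub) (le_csSup ⟨3, fun x hx => hub x hx⟩ hmem)
  · exact ⟨fun _ => 2, fun p => if p 0 = 0 then A else B, fun _ => by norm_num,
      conc_example A B hAB⟩

end WordGrid
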